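/- A full-dimensional polytope P in ℝ^d is perfectly centered if and only if P is centered and N(F;P) ∩ N(F^D;P*) ≠ ∅ for every nontrivial face F of P. -/

import Mathlib

open Pointwise RealInnerProductSpace

noncomputable section

abbrev E (d : ℕ) : Type := EuclideanSpace ℝ (Fin d)

def IsPolytope {d : ℕ} (P : Set (E d)) : Prop :=
  ∃ V : Finset (E d), V.Nonempty ∧ P = convexHull ℝ (V : Set (E d))

def maximizers {d : ℕ} (P : Set (E d)) (c : E d) : Set (E d) :=
  {x ∈ P | ∀ y ∈ P, ⟪y, c⟫ ≤ ⟪x, c⟫}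

def IsFace {d : ℕ} (P F : Set (E d)) : Prop :=
  F = ∅ ∨ F = P ∨ ∃ c : E d, c ≠ 0 ∧ F = maximizers P c

def IsNontrivialFace {d : ℕ} (P F : Set (E d)) : Prop :=
  IsFace P F ∧ F ≠ ∅ ∧ F ≠ P

def polarDual {d : ℕ} (P : Set (E d)) : Set (E d) :=
  {x | ∀ y ∈ P, ⟪x, y⟫ ≤ 1}

def dualFace {d : ℕ} (P F : Set (E d)) : Set (E d) :=
  {x ∈ polarDual P | ∀ f ∈ F, ⟪x, f⟫ = 1}

def normalCone {d : ℕ} (P F : Set (E d)) : Set (E d) :=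
  {c | maximizers P c = F}

def IsPerfectlyCentered {d : ℕ} (P : Set (E d)) : Prop :=
  ∀ F : Set (E d), IsFace P F → F.Nonempty →
    (intrinsicInterior ℝ F ∩ normalCone P F).Nonempty

def dimSet {d : ℕ} (F : Set (E d)) : ℕ :=
  Module.finrank ℝ (affineSpan ℝ F).direction

def fVec {d : ℕ} (P : Set (E d)) (k : ℕ) : ℕ :=
  {F : Set (E d) | IsFace P F ∧ F.Nonempty ∧ dimSet F = k}.ncard

attribute [local instance] AffineSubspace.toNormedAddTorsor

section Helpers

open Set

variable {d : ℕ}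

lemma inner_le_of_forall_le {V : Set (E d)} {u : E d} {b : ℝ}
    (h : ∀ v ∈ V, ⟪v, u⟫ ≤ b) {y : E d} (hy : y ∈ convexHull ℝ V) : ⟪y, u⟫ ≤ b := by
  have hlin : IsLinearMap ℝ (fun z : E d => ⟪z, u⟫) :=
    ⟨fun a b => inner_add_left a b u, fun c a => real_inner_smul_left a u c⟩
  exact convexHull_min h (convex_halfSpace_le hlin b) hy

lemma exists_beyond {F : Set (E d)} {x f : E d} (hx : x ∈ intrinsicInterior ℝ F) (hf : f ∈ F) :
    ∃ ε : ℝ, 0 < ε ∧ x + ε • (x - f) ∈ F := by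
  obtain ⟨y, hy, hyx⟩ := hx
  haveI : Nonempty (affineSpan ℝ F) := ⟨⟨f, subset_affineSpan ℝ F hf⟩⟩
  let f' : affineSpan ℝ F := ⟨f, subset_affineSpan ℝ F hf⟩
  let γ : ℝ → affineSpan ℝ F := fun t => (t • (y -ᵥ f') : (affineSpan ℝ F).direction) +ᵥ y
  have hcont : Continuous γ := Continuous.vadd (f := fun t : ℝ => (t • (y -ᵥ f') : (affineSpan ℝ F).direction)) (g := fun _ => y) (continuous_id.smul continuous_const) continuous_const
  have hopen : IsOpen (γ ⁻¹' interior (((↑) : affineSpan ℝ F → E d) ⁻¹' F)) :=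
    isOpen_interior.preimage hcont
  have h0 : (0:ℝ) ∈ γ ⁻¹' interior (((↑) : affineSpan ℝ F → E d) ⁻¹' F) := by
    simpa only [mem_preimage, zero_smul, zero_vadd, γ] using hy
  obtain ⟨δ, hδ, hball⟩ := Metric.isOpen_iff.1 hopen 0 h0
  refine ⟨δ/2, by linarith, ?_⟩
  have hmem : γ (δ/2) ∈ interior (((↑) : affineSpan ℝ F → E d) ⁻¹' F) := by
    apply hball
    simp only [Metric.mem_ball, dist_zero_right, Real.norm_eq_abs]
    rw [abs_of_pos (by linarith)]; linarith
  have hF0 : γ (δ/2) ∈ (((↑) : affineSpan ℝ F → E d) ⁻¹' F) := interior_subset hmem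
  have hF' : ((γ (δ/2) : affineSpan ℝ F) : E d) ∈ F := hF0
  have hcoe : ((γ (δ/2) : affineSpan ℝ F) : E d) = x + (δ/2) • (x - f) := by
    show (((δ/2) • (y -ᵥ f') : (affineSpan ℝ F).direction) +ᵥ y : E d) = _
    rw [AffineSubspace.coe_vadd, Submodule.coe_smul, AffineSubspace.coe_vsub]
    rw [hyx]
    show (δ/2) • (x - f) + x = _
    abel
  rwa [hcoe] at hF'

lemma exists_support {F : Set (E d)} (hF : Convex ℝ F) {x : E d} (hx : x ∈ F)
    (hxn : x ∉ intrinsicInterior ℝ F) :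
    ∃ w f₀, f₀ ∈ F ∧ (∀ y ∈ F, ⟪y, w⟫ ≤ ⟪x, w⟫) ∧ ⟪f₀, w⟫ < ⟪x, w⟫ := by
  haveI : Nonempty F := ⟨⟨x, hx⟩⟩
  haveI : Nonempty (affineSpan ℝ F) := ⟨⟨x, subset_affineSpan ℝ F hx⟩⟩
  set A := affineSpan ℝ F with hA
  let x' : A := ⟨x, subset_affineSpan ℝ F hx⟩
  let e := AffineIsometryEquiv.constVSub ℝ x'
  let S : Set A := ((↑) : A → E d) ⁻¹' F
  have hSspan : affineSpan ℝ S = ⊤ := affineSpan_coe_preimage_eq_top F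
  let T : Set A.direction := ⇑e '' S
  have hTdesc : T = {v : A.direction | x - (v : E d) ∈ F} := by
    ext v
    constructor
    · rintro ⟨y', hy', rfl⟩
      show x - ((e y' : A.direction) : E d) ∈ F
      have h1 : ((e y' : A.direction) : E d) = x - (y' : E d) := rfl
      rw [h1]
      have h2 : x - (x - (y' : E d)) = (y' : E d) := by abel
      rw [h2]
      exact hy'
    · intro hv
      have hmem : x - (v : E d) ∈ A := subset_affineSpan ℝ F hv
      refine ⟨⟨x - (v : E d), hmem⟩, hv, ?_⟩
      apply Subtype.ext
      show ((x' -ᵥ (⟨x - (v : E d), hmem⟩ : A) : A.direction) : E d) = (v : E d)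
      show x - (x - (v : E d)) = (v : E d)
      abel
  have hT : Convex ℝ T := by
    rw [hTdesc]
    intro v₁ h1 v₂ h2 t s ht hs hts
    show x - ((t • v₁ + s • v₂ : A.direction) : E d) ∈ F
    have : x - ((t • v₁ + s • v₂ : A.direction) : E d)
        = t • (x - (v₁ : E d)) + s • (x - (v₂ : E d)) := by
      push_cast
      rw [smul_sub, smul_sub, ← add_sub_add_comm, ← add_smul, hts, one_smul]
    rw [this]
    exact hF h1 h2 ht hs hts
  have hTspan : affineSpan ℝ T = ⊤ :=
    AffineMap.span_eq_top_of_surjective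
      (f := (e.toAffineEquiv : A ≃ᵃ[ℝ] A.direction).toAffineMap) e.surjective hSspan
  have hTint : (interior T).Nonempty := hT.interior_nonempty_iff_affineSpan_eq_top.mpr hTspan
  have hx'S : x' ∉ interior S := fun h => hxn ⟨x', h, rfl⟩
  have hx₀ : e x' ∉ interior T := by
    intro h
    have himg : interior T = ⇑e '' interior S := by
      have h1 : T = ⇑e.toHomeomorph '' S := rfl
      rw [h1, ← e.toHomeomorph.image_interior]
      rfl
    rw [himg] at h
    obtain ⟨s₀, hs₀, hes₀⟩ := h
    exact hx'S (e.injective hes₀ ▸ hs₀)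
  obtain ⟨ℓ, hℓ⟩ := geometric_hahn_banach_open_point hT.interior isOpen_interior hx₀
  obtain ⟨b, hb⟩ := hTint
  have hTle : ∀ a ∈ T, ℓ a ≤ ℓ (e x') := by
    intro a ha
    have hseg : openSegment ℝ b a ⊆ interior T :=
      hT.openSegment_interior_self_subset_interior hb ha
    have hclos : a ∈ closure (openSegment ℝ b a) := by
      rw [closure_openSegment]
      exact right_mem_segment ℝ b a
    exact closure_minimal (fun z hz => le_of_lt (hℓ z (hseg hz)))
      (isClosed_le ℓ.continuous continuous_const) hclos
  let wD : A.direction := (InnerProductSpace.toDual ℝ A.direction).symm ℓ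
  have hℓw : ∀ a : A.direction, ℓ a = ⟪(wD : E d), (a : E d)⟫ := by
    intro a
    rw [← Submodule.coe_inner]
    exact (InnerProductSpace.toDual_symm_apply).symm
  have hcoee : ∀ y' : A, ((e y' : A.direction) : E d) = x - (y' : E d) := fun y' => rfl
  obtain ⟨f₀', hf₀S, hf₀e⟩ : b ∈ ⇑e '' S := interior_subset hb
  refine ⟨-(wD : E d), (f₀' : E d), hf₀S, ?_, ?_⟩
  · intro y hy
    have h2 := hTle _ (mem_image_of_mem ⇑e (show (⟨y, subset_affineSpan ℝ F hy⟩ : A) ∈ S from hy))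
    rw [hℓw, hℓw, hcoee, hcoee] at h2
    simp only [inner_sub_right] at h2
    simp only [inner_neg_right]
    have e1 : ⟪y, ((wD : E d))⟫ = ⟪((wD : E d)), y⟫ := real_inner_comm _ _
    have e2 : ⟪x, ((wD : E d))⟫ = ⟪((wD : E d)), x⟫ := real_inner_comm _ _
    linarith
  · have hlt := hℓ b hb
    rw [← hf₀e, hℓw, hℓw, hcoee, hcoee] at hlt
    simp only [inner_sub_right] at hlt
    simp only [inner_neg_right]
    have e1 : ⟪(f₀' : E d), ((wD : E d))⟫ = ⟪((wD : E d)), (f₀' : E d)⟫ := real_inner_comm _ _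
    have e2 : ⟪x, ((wD : E d))⟫ = ⟪((wD : E d)), x⟫ := real_inner_comm _ _
    linarith

lemma maximizers_zero (P : Set (E d)) : maximizers P 0 = P := by
  ext y
  constructor
  · exact fun h => h.1
  · exact fun h => ⟨h, fun z _ => by simp [inner_zero_right]⟩

lemma maximizers_smul {P : Set (E d)} {c : E d} {t : ℝ} (ht : 0 < t) :
    maximizers P (t • c) = maximizers P c := by
  unfold maximizers
  ext z
  simp only [Set.mem_setOf_eq, real_inner_smul_right]
  constructor
  · rintro ⟨hz, hm⟩
    exact ⟨hz, fun y hy => le_of_mul_le_mul_left (hm y hy) ht⟩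
  · rintro ⟨hz, hm⟩
    exact ⟨hz, fun y hy => mul_le_mul_of_nonneg_left (hm y hy) ht.le⟩

lemma maximizers_convex {P : Set (E d)} (hP : Convex ℝ P) (c : E d) :
    Convex ℝ (maximizers P c) := by
  intro z₁ h1 z₂ h2 a b ha hb hab
  refine ⟨hP h1.1 h2.1 ha hb hab, fun y hy => ?_⟩
  have e1 := h1.2 y hy
  have e2 := h2.2 y hy
  have : ⟪a • z₁ + b • z₂, c⟫ = a * ⟪z₁, c⟫ + b * ⟪z₂, c⟫ := by
    rw [inner_add_left, real_inner_smul_left, real_inner_smul_left]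
  rw [this]
  calc ⟪y, c⟫ = a * ⟪y, c⟫ + b * ⟪y, c⟫ := by rw [← add_mul, hab, one_mul]
  _ ≤ a * ⟪z₁, c⟫ + b * ⟪z₂, c⟫ := by
      gcongr <;> assumption

lemma exists_pos_inner {P : Set (E d)} (h0 : (0:E d) ∈ interior P) {c : E d} (hc : c ≠ 0) :
    ∃ p ∈ P, 0 < ⟪p, c⟫ := by
  obtain ⟨ε, hε, hball⟩ := Metric.isOpen_iff.1 isOpen_interior 0 h0
  have hcn : (0:ℝ) < ‖c‖ := norm_pos_iff.mpr hc
  refine ⟨(ε/(2*‖c‖)) • c, interior_subset (hball ?_), ?_⟩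
  · rw [Metric.mem_ball, dist_zero_right, norm_smul, Real.norm_eq_abs,
      abs_of_pos (by positivity)]
    have heq : ε/(2*‖c‖)*‖c‖ = ε/2 := by field_simp
    rw [heq]; linarith
  · rw [real_inner_smul_left, real_inner_self_eq_norm_mul_norm]
    positivity

end Helpers
set_option maxHeartbeats 2000000 in
theorem perfectlyCentered_iff_normalCone_inter {d : ℕ} (P : Set (E d))
    (hP : IsPolytope P) (hfull : affineSpan ℝ P = ⊤) :
    IsPerfectlyCentered P ↔
      0 ∈ interior P ∧
      ∀ F : Set (E d), IsNontrivialFace P F →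
        (normalCone P F ∩ normalCone (polarDual P) (dualFace P F)).Nonempty := by
  classical
  obtain ⟨V, hVne, hPV⟩ := hP
  have hPconv : Convex ℝ P := hPV ▸ convex_convexHull ℝ _
  have hPne : P.Nonempty := by
    rw [hPV]
    exact (convexHull_nonempty_iff).mpr (Finset.coe_nonempty.mpr hVne)
  have hPcompact : IsCompact P := hPV ▸ V.finite_toSet.isCompact_convexHull (𝕜 := ℝ)
  have hPclosed : IsClosed P := hPcompact.isClosed
  constructor
  · intro hPC
    -- Part 1 : 0 ∈ interior P
    have h0 : (0 : E d) ∈ interior P := by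
      obtain ⟨x, hxI, hxN⟩ := hPC P (Or.inr (Or.inl rfl)) hPne
      have hxN' : maximizers P x = P := hxN
      have hx0 : x = 0 := by
        have hconst : ∀ y ∈ P, ∀ z ∈ P, ⟪y, x⟫ = ⟪z, x⟫ := by
          intro y hy z hz
          have hy' : y ∈ maximizers P x := by rw [hxN']; exact hy
          have hz' : z ∈ maximizers P x := by rw [hxN']; exact hz
          exact le_antisymm (hz'.2 y hy) (hy'.2 z hz)
        have horth : ∀ v ∈ vectorSpan ℝ P, ⟪v, x⟫ = 0 := by
          intro v hv
          rw [vectorSpan_def] at hv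
          induction hv using Submodule.span_induction with
          | mem u hu =>
            obtain ⟨a, ha, b, hb, rfl⟩ := hu
            show ⟪a - b, x⟫ = 0
            rw [inner_sub_left, hconst a ha b hb, sub_self]
          | zero => exact inner_zero_left x
          | add u v _ _ hu hv => rw [inner_add_left, hu, hv, add_zero]
          | smul t u _ hu => rw [real_inner_smul_left, hu, mul_zero]
        have hvs : vectorSpan ℝ P = ⊤ := by
          rw [← direction_affineSpan, hfull]
          exact AffineSubspace.direction_top ℝ _ _
        have : ⟪x, x⟫ = 0 := horth x (by rw [hvs]; trivial)
        exact inner_self_eq_zero.mp this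
      rw [hx0] at hxI
      obtain ⟨z, hz⟩ := hPconv.interior_nonempty_iff_affineSpan_eq_top.mpr hfull
      obtain ⟨ε, hε, hq⟩ := exists_beyond hxI (interior_subset hz)
      simp only [zero_add, zero_sub, smul_neg] at hq
      have hcombo := hPconv.combo_interior_closure_mem_interior hz (subset_closure hq)
        (a := ε/(1+ε)) (b := 1/(1+ε)) (by positivity) (by positivity)
        (by field_simp; ring)
      have : (ε/(1+ε)) • z + (1/(1+ε)) • (-(ε • z)) = (0 : E d) := by
        rw [smul_neg, smul_smul, ← sub_eq_add_neg, ← sub_smul]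
        have : ε/(1+ε) - 1/(1+ε)*ε = 0 := by field_simp; ring
        rw [this, zero_smul]
      rwa [this] at hcombo
    refine ⟨h0, ?_⟩
    -- Part 2
    intro F hNF
    obtain ⟨hFface, hFne', hFneP⟩ := hNF
    obtain ⟨x, hxI, hxN⟩ := hPC F hFface (Set.nonempty_iff_ne_empty.mpr hFne')
    have hxN' : maximizers P x = F := hxN
    have hxne : x ≠ 0 := by
      intro h
      rw [h, maximizers_zero] at hxN'
      exact hFneP hxN'.symm
    have hxF : x ∈ F := intrinsicInterior_subset hxI
    have hxP : x ∈ P := by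
      have : F ⊆ P := by rw [← hxN']; exact Set.sep_subset _ _
      exact this hxF
    have hxmem : x ∈ maximizers P x := by rw [hxN']; exact hxF
    have hxmax : ∀ y ∈ P, ⟪y, x⟫ ≤ ⟪x, x⟫ := hxmem.2
    have hFval : ∀ f ∈ F, ⟪f, x⟫ = ⟪x, x⟫ := by
      intro f hf
      have hfmem : f ∈ maximizers P x := by rw [hxN']; exact hf
      exact le_antisymm (hxmax f hfmem.1) (hfmem.2 x hxP)
    have hh : (0:ℝ) < ⟪x, x⟫ := by
      rw [real_inner_self_eq_norm_mul_norm]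
      have := norm_pos_iff.mpr hxne
      exact mul_pos this this
    refine ⟨x, hxN, ?_⟩
    show maximizers (polarDual P) x = dualFace P F
    have hu₀ : (⟪x, x⟫)⁻¹ • x ∈ polarDual P := by
      intro z hz
      rw [real_inner_smul_left]
      have : ⟪x, z⟫ ≤ ⟪x, x⟫ := by rw [real_inner_comm]; exact hxmax z hz
      rw [inv_mul_le_iff₀ hh, mul_one]
      exact this
    have hu₀x : ⟪(⟪x, x⟫)⁻¹ • x, x⟫ = 1 := by
      rw [real_inner_smul_left, inv_mul_cancel₀ (ne_of_gt hh)]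
    ext w
    constructor
    · rintro ⟨hwP, hwmax⟩
      have hw1 : ⟪w, x⟫ = 1 := by
        have h1 : ⟪w, x⟫ ≤ 1 := hwP x hxP
        have h2 : (1:ℝ) ≤ ⟪w, x⟫ := by
          have := hwmax _ hu₀
          rwa [hu₀x] at this
        linarith
      refine ⟨hwP, fun f hf => ?_⟩
      have hle : ⟪w, f⟫ ≤ 1 := hwP f (by
        have : F ⊆ P := by rw [← hxN']; exact Set.sep_subset _ _
        exact this hf)
      by_contra hne
      have hlt : ⟪w, f⟫ < 1 := lt_of_le_of_ne hle hne
      obtain ⟨ε, hε, hp⟩ := exists_beyond hxI hf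
      have hpP : x + ε • (x - f) ∈ P := by
        have : F ⊆ P := by rw [← hxN']; exact Set.sep_subset _ _
        exact this hp
      have := hwP _ hpP
      rw [inner_add_right, real_inner_smul_right, inner_sub_right, hw1] at this
      nlinarith
    · rintro ⟨hwP, hwF⟩
      refine ⟨hwP, fun y hy => ?_⟩
      rw [hwF x hxF]
      exact hy x hxP
  · rintro ⟨h0, hN⟩ F hFface hFne
    by_cases hFP : F = P
    · subst hFP
      exact ⟨0, interior_subset_intrinsicInterior h0, maximizers_zero F⟩
    · have hFne' : F ≠ ∅ := Set.nonempty_iff_ne_empty.mp hFne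
      obtain ⟨c, hcN0, hcN0'⟩ := hN F ⟨hFface, hFne', hFP⟩
      have hcN : maximizers P c = F := hcN0
      have hcN' : maximizers (polarDual P) c = dualFace P F := hcN0'
      have hFsubP : F ⊆ P := by rw [← hcN]; exact Set.sep_subset _ _
      have hcne : c ≠ 0 := by
        intro h
        rw [h, maximizers_zero] at hcN
        exact hFP hcN.symm
      obtain ⟨f₁, hf₁⟩ := hFne
      have hf₁m : f₁ ∈ maximizers P c := by rw [hcN]; exact hf₁
      have hmax : ∀ y ∈ P, ⟪y, c⟫ ≤ ⟪f₁, c⟫ := hf₁m.2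
      obtain ⟨p, hpP, hppos⟩ := exists_pos_inner h0 hcne
      have hh : 0 < ⟪f₁, c⟫ := lt_of_lt_of_le hppos (hmax p hpP)
      have hFval : ∀ f ∈ F, ⟪f, c⟫ = ⟪f₁, c⟫ := by
        intro f hf
        have hfm : f ∈ maximizers P c := by rw [hcN]; exact hf
        exact le_antisymm (hmax f hfm.1) (hfm.2 f₁ hf₁m.1)
      have hu₁P : (⟪f₁, c⟫)⁻¹ • c ∈ polarDual P := by
        intro z hz
        rw [real_inner_smul_left, inv_mul_le_iff₀ hh, mul_one, real_inner_comm z c]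
        exact hmax z hz
      have hu₁D : (⟪f₁, c⟫)⁻¹ • c ∈ dualFace P F := by
        refine ⟨hu₁P, fun f hf => ?_⟩
        rw [real_inner_smul_left, real_inner_comm f c, hFval f hf,
          inv_mul_cancel₀ (ne_of_gt hh)]
      have hu₁m : (⟪f₁, c⟫)⁻¹ • c ∈ maximizers (polarDual P) c := by rw [hcN']; exact hu₁D
      have hmP : ∀ y ∈ polarDual P, ⟪y, c⟫ ≤ ⟪(⟪f₁, c⟫)⁻¹ • c, c⟫ := hu₁m.2
      have hcc : 0 < ⟪c, c⟫ := by
        rw [real_inner_self_eq_norm_mul_norm]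
        have := norm_pos_iff.mpr hcne
        exact mul_pos this this
      have hmval : ⟪(⟪f₁, c⟫)⁻¹ • c, c⟫ = (⟪f₁, c⟫)⁻¹ * ⟪c, c⟫ := real_inner_smul_left _ _ _
      have hmpos : 0 < ⟪(⟪f₁, c⟫)⁻¹ • c, c⟫ := by
        rw [hmval]
        exact mul_pos (inv_pos.mpr hh) hcc
      set m := ⟪(⟪f₁, c⟫)⁻¹ • c, c⟫ with hmdef
      obtain ⟨x, hxdef⟩ : ∃ x : E d, x = m⁻¹ • c := ⟨_, rfl⟩
      have hxc : ⟪x, c⟫ = ⟪f₁, c⟫ := by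
        rw [hxdef, real_inner_smul_left, hmval]
        have h1 : ⟪f₁, c⟫ ≠ 0 := ne_of_gt hh
        have h2 : ⟪c, c⟫ ≠ 0 := ne_of_gt hcc
        rw [mul_inv, inv_inv, mul_assoc, inv_mul_cancel₀ h2, mul_one]
      have hxP : x ∈ P := by
        by_contra hxP
        obtain ⟨ℓ, u, hltu, hux⟩ := geometric_hahn_banach_closed_point hPconv hPclosed hxP
        set w' := (InnerProductSpace.toDual ℝ (E d)).symm ℓ with hw'
        have hℓ : ∀ a : E d, ℓ a = ⟪w', a⟫ := fun a => (InnerProductSpace.toDual_symm_apply).symm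
        have h0P : (0 : E d) ∈ P := interior_subset h0
        have hupos : 0 < u := by
          have := hltu 0 h0P
          rwa [map_zero] at this
        have hwx : u < ⟪w', x⟫ := by rw [← hℓ]; exact hux
        have hwne : w' ≠ 0 := by
          intro hw0
          rw [hw0, inner_zero_left] at hwx
          linarith
        obtain ⟨yw, hywP, hywmax0⟩ := hPcompact.exists_isMaxOn hPne
          ((continuous_id.inner continuous_const).continuousOn :
            ContinuousOn (fun y : E d => ⟪y, w'⟫) P)
        rw [isMaxOn_iff] at hywmax0
        have hywmax : ∀ z ∈ P, ⟪z, w'⟫ ≤ ⟪yw, w'⟫ := hywmax0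
        obtain ⟨q, hqP, hqpos⟩ := exists_pos_inner h0 hwne
        have hhw : 0 < ⟪yw, w'⟫ := lt_of_lt_of_le hqpos (hywmax q hqP)
        have hu₂ : (⟪yw, w'⟫)⁻¹ • w' ∈ polarDual P := by
          intro z hz
          rw [real_inner_smul_left, inv_mul_le_iff₀ hhw, mul_one, real_inner_comm z w']
          exact hywmax z hz
        have hle := hmP _ hu₂
        rw [real_inner_smul_left] at hle
        have hwc : ⟪w', c⟫ = m * ⟪w', x⟫ := by
          rw [hxdef, real_inner_smul_right]
          field_simp
        have h5 : ⟪yw, w'⟫ < u := by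
          have := hltu yw hywP
          rw [hℓ, real_inner_comm yw w'] at this
          exact this
        have hle' : ⟪w', c⟫ ≤ ⟪yw, w'⟫ * m := (inv_mul_le_iff₀ hhw).mp hle
        have p1 := mul_lt_mul_of_pos_left hwx hmpos
        have p2 := mul_lt_mul_of_pos_left h5 hmpos
        nlinarith [hwc]
      have hxF : x ∈ F := by
        rw [← hcN]
        exact ⟨hxP, fun y hy => by rw [hxc]; exact hmax y hy⟩
      have hxN : maximizers P x = F := by
        rw [hxdef, maximizers_smul (inv_pos.mpr hmpos)]
        exact hcN
      have hxN' : maximizers (polarDual P) x = dualFace P F := by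
        rw [hxdef, maximizers_smul (inv_pos.mpr hmpos)]
        exact hcN'
      have hxne : x ≠ 0 := by
        intro hx0
        rw [hx0, maximizers_zero] at hxN
        exact hFP hxN.symm
      have hFconv : Convex ℝ F := by rw [← hcN]; exact maximizers_convex hPconv c
      have hxmem : x ∈ maximizers P x := by rw [hxN]; exact hxF
      have hxmax : ∀ y ∈ P, ⟪y, x⟫ ≤ ⟪x, x⟫ := hxmem.2
      have hx2pos : 0 < ⟪x, x⟫ := by
        rw [real_inner_self_eq_norm_mul_norm]
        have := norm_pos_iff.mpr hxne
        exact mul_pos this this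
      have hxval : ∀ f ∈ F, ⟪f, x⟫ = ⟪x, x⟫ := by
        intro f hf
        have hfm : f ∈ maximizers P x := by rw [hxN]; exact hf
        exact le_antisymm (hxmax f hfm.1) (hfm.2 x hxP)
      have hxrel : x ∈ intrinsicInterior ℝ F := by
        by_contra hxrel
        obtain ⟨w, f₀, hf₀F, hsupp, hstrict⟩ := exists_support hFconv hxF hxrel
        have hVsub : (V : Set (E d)) ⊆ P := by rw [hPV]; exact subset_convexHull ℝ _
        set W := V.filter (fun v => v ∉ F) with hWdef
        have hWne : W.Nonempty := by
          by_contra hWe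
          rw [Finset.not_nonempty_iff_eq_empty] at hWe
          have hVF : (V : Set (E d)) ⊆ F := by
            intro v hv
            by_contra hvF
            have : v ∈ W := Finset.mem_filter.mpr ⟨by exact_mod_cast hv, hvF⟩
            rw [hWe] at this
            exact absurd this (Finset.notMem_empty v)
          refine hFP (le_antisymm hFsubP ?_)
          rw [hPV]
          exact convexHull_min hVF hFconv
        have hWlt : ∀ v ∈ W, ⟪v, x⟫ < ⟪x, x⟫ := by
          intro v hv
          obtain ⟨hvV, hvF⟩ := Finset.mem_filter.mp hv
          have hvP : v ∈ P := hVsub hvV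
          have hvm : v ∉ maximizers P x := by rw [hxN]; exact hvF
          by_contra hge
          push_neg at hge
          exact hvm ⟨hvP, fun y hy => le_trans (hxmax y hy) hge⟩
        have hslt : W.sup' hWne (fun v => ⟪v, x⟫) < ⟪x, x⟫ :=
          (Finset.sup'_lt_iff hWne).mpr hWlt
        set δ := ⟪x, x⟫ - W.sup' hWne (fun v => ⟪v, x⟫) with hδdef
        have hδpos : 0 < δ := sub_pos.mpr hslt
        set M := max 0 (W.sup' hWne (fun v => ⟪v, w⟫ - ⟪x, w⟫)) with hMdef
        have hM0 : (0:ℝ) ≤ M := le_max_left _ _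
        set ε := min (δ / (M + 1)) (⟪x, x⟫ / (2 * (|⟪x, w⟫| + 1))) with hεdef
        have hεpos : 0 < ε :=
          lt_min (div_pos hδpos (by linarith)) (div_pos hx2pos (by positivity))
        have hεM : ε * (M + 1) ≤ δ := by
          have h1 : ε ≤ δ / (M + 1) := min_le_left _ _
          have h2 : (0:ℝ) < M + 1 := by linarith
          calc ε * (M + 1) ≤ (δ / (M + 1)) * (M + 1) := by gcongr
          _ = δ := by field_simp
        have hεx : ε * |⟪x, w⟫| ≤ ⟪x, x⟫ / 2 := by
          have h1 : ε ≤ ⟪x, x⟫ / (2 * (|⟪x, w⟫| + 1)) := min_le_right _ _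
          have h2 : (0:ℝ) ≤ |⟪x, w⟫| := abs_nonneg _
          calc ε * |⟪x, w⟫| ≤ (⟪x, x⟫ / (2 * (|⟪x, w⟫| + 1))) * |⟪x, w⟫| := by gcongr
          _ ≤ ⟪x, x⟫ / 2 := by
              rw [div_mul_eq_mul_div, div_le_div_iff₀ (by positivity) (by norm_num)]
              nlinarith
        have hhε : 0 < ⟪x, x⟫ + ε * ⟪x, w⟫ := by
          have := neg_abs_le ⟪x, w⟫
          nlinarith
        have hkey : ∀ v ∈ (V : Set (E d)), ⟪v, x + ε • w⟫ ≤ ⟪x, x⟫ + ε * ⟪x, w⟫ := by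
          intro v hv
          rw [inner_add_right, real_inner_smul_right]
          by_cases hvF : v ∈ F
          · have h1 : ⟪v, x⟫ = ⟪x, x⟫ := hxval v hvF
            have h2 : ⟪v, w⟫ ≤ ⟪x, w⟫ := hsupp v hvF
            nlinarith
          · have hvW : v ∈ W := Finset.mem_filter.mpr ⟨by exact_mod_cast hv, hvF⟩
            have h1 : ⟪v, x⟫ ≤ W.sup' hWne (fun v => ⟪v, x⟫) :=
              Finset.le_sup' (fun v => ⟪v, x⟫) hvW
            have h2 : ⟪v, w⟫ - ⟪x, w⟫ ≤ M :=
              le_trans (Finset.le_sup' (fun v => ⟪v, w⟫ - ⟪x, w⟫) hvW) (le_max_right _ _)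
            have h3 : ⟪v, x⟫ ≤ ⟪x, x⟫ - δ := by rw [hδdef]; linarith
            nlinarith
        have hall : ∀ y ∈ P, ⟪y, x + ε • w⟫ ≤ ⟪x, x⟫ + ε * ⟪x, w⟫ := by
          intro y hy
          have hy' : y ∈ convexHull ℝ (V : Set (E d)) := by rw [← hPV]; exact hy
          exact inner_le_of_forall_le hkey hy'
        have hu'P : (⟪x, x⟫ + ε * ⟪x, w⟫)⁻¹ • (x + ε • w) ∈ polarDual P := by
          intro z hz
          rw [real_inner_smul_left, inv_mul_le_iff₀ hhε, mul_one, real_inner_comm z (x + ε • w)]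
          exact hall z hz
        have hu'x : ⟪(⟪x, x⟫ + ε * ⟪x, w⟫)⁻¹ • (x + ε • w), x⟫ = 1 := by
          rw [real_inner_smul_left, inner_add_left, real_inner_smul_left,
            real_inner_comm x w]
          exact inv_mul_cancel₀ (ne_of_gt hhε)
        have hu'D : (⟪x, x⟫ + ε * ⟪x, w⟫)⁻¹ • (x + ε • w) ∈ dualFace P F := by
          rw [← hxN']
          exact ⟨hu'P, fun y hy => by rw [hu'x]; exact hy x hxP⟩
        have hcontra := hu'D.2 f₀ hf₀F
        rw [real_inner_smul_left, inner_add_left, real_inner_smul_left] at hcontra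
        have e1 : ⟪x, f₀⟫ = ⟪x, x⟫ := (real_inner_comm f₀ x).trans (hxval f₀ hf₀F)
        have e2 : ⟪w, f₀⟫ = ⟪f₀, w⟫ := real_inner_comm f₀ w
        rw [e1, e2] at hcontra
        have heq := (inv_mul_eq_one₀ (ne_of_gt hhε)).mp hcontra
        have := mul_lt_mul_of_pos_left hstrict hεpos
        linarith
      exact ⟨x, hxrel, hxN⟩
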